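/- Let M_1 ⊕ M_2 = (E, ρ) be the direct sum of q-matroids M_i = (E_i, ρ_i). For all subspaces V_1 ≤ E_1 and V_2 ≤ E_2 one has ρ(V_1 ⊕ V_2) = ρ_1(V_1) + ρ_2(V_2). In particular, ρ(E) = ρ_1(E_1) + ρ_2(E_2), i.e. the rank of M_1 ⊕ M_2 equals the sum of the ranks of M_1 and M_2. -/
import Mathlib


open Module

/-- The rank function of the direct sum of two q-matroids `(E₁, ρ₁)`, `(E₂, ρ₂)` on the
ground space `E₁ × E₂`, as an integer:
`ρ(V) = dim V + min_{X ≤ V} (ρ₁(π₁(X)) + ρ₂(π₂(X)) − dim X)`. -/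
noncomputable def dsRank {Fq E₁ E₂ : Type*} [Field Fq]
    [AddCommGroup E₁] [Module Fq E₁] [AddCommGroup E₂] [Module Fq E₂]
    (ρ₁ : Submodule Fq E₁ → ℕ) (ρ₂ : Submodule Fq E₂ → ℕ)
    (V : Submodule Fq (E₁ × E₂)) : ℤ :=
  (finrank Fq V : ℤ) +
    sInf {z : ℤ | ∃ X : Submodule Fq (E₁ × E₂), X ≤ V ∧
      z = (ρ₁ (X.map (LinearMap.fst Fq E₁ E₂)) : ℤ) + (ρ₂ (X.map (LinearMap.snd Fq E₁ E₂)) : ℤ)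
            - (finrank Fq X : ℤ)}

/-- A submodule product is linearly equivalent to the product of the submodules. -/
def prodSubEquiv {K M N : Type*} [Field K] [AddCommGroup M] [Module K M]
    [AddCommGroup N] [Module K N] (A : Submodule K M) (B : Submodule K N) :
    (A.prod B) ≃ₗ[K] A × B where
  toFun x := (⟨x.1.1, x.2.1⟩, ⟨x.1.2, x.2.2⟩)
  invFun p := ⟨(p.1.1, p.2.1), ⟨p.1.2, p.2.2⟩⟩
  left_inv _ := rfl
  right_inv _ := rfl
  map_add' _ _ := rfl
  map_smul' _ _ := rfl

lemma finrank_prodSub {K M N : Type*} [Field K] [AddCommGroup M] [Module K M]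
    [AddCommGroup N] [Module K N] [FiniteDimensional K M] [FiniteDimensional K N]
    (A : Submodule K M) (B : Submodule K N) :
    finrank K (A.prod B) = finrank K A + finrank K B := by
  rw [(prodSubEquiv A B).finrank_eq, Module.finrank_prod]

/-- Local semimodularity: for `U ≤ W`, `ρ W ≤ ρ U + dim W − dim U`. -/
lemma rank_diff_le {K M : Type*} [Field K] [AddCommGroup M] [Module K M]
    [FiniteDimensional K M] (ρ : Submodule K M → ℕ)
    (hR1 : ∀ V : Submodule K M, ρ V ≤ finrank K V)
    (hR3 : ∀ V W : Submodule K M, ρ (V ⊔ W) + ρ (V ⊓ W) ≤ ρ V + ρ W)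
    {U W : Submodule K M} (h : U ≤ W) :
    (ρ W : ℤ) ≤ (ρ U : ℤ) + (finrank K W : ℤ) - (finrank K U : ℤ) := by
  obtain ⟨C', hC⟩ := Submodule.exists_isCompl (U.comap W.subtype)
  set C : Submodule K M := C'.map W.subtype with hCdef
  have hmapU : (U.comap W.subtype).map W.subtype = U := by
    rw [Submodule.map_comap_subtype, inf_eq_right.mpr h]
  have hsup : U ⊔ C = W := by
    have := congrArg (Submodule.map W.subtype) hC.sup_eq_top
    rwa [Submodule.map_sup, hmapU, Submodule.map_subtype_top] at this
  have hinf : U ⊓ C = ⊥ := by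
    have := congrArg (Submodule.map W.subtype) hC.inf_eq_bot
    rwa [Submodule.map_inf _ (Submodule.injective_subtype W), hmapU,
      Submodule.map_bot] at this
  have hfr : finrank K U + finrank K C = finrank K W := by
    have h1 := Submodule.finrank_add_eq_of_isCompl hC
    have h2 : finrank K (U.comap W.subtype) = finrank K U := by
      conv_rhs => rw [← hmapU]
      rw [Submodule.finrank_map_subtype_eq]
    rw [hCdef, Submodule.finrank_map_subtype_eq, ← h2]
    exact h1
  have key : ρ W ≤ ρ U + finrank K C := by
    calc ρ W = ρ (U ⊔ C) := by rw [hsup]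
    _ ≤ ρ (U ⊔ C) + ρ (U ⊓ C) := Nat.le_add_right _ _
    _ ≤ ρ U + ρ C := hR3 U C
    _ ≤ ρ U + finrank K C := by exact Nat.add_le_add_left (hR1 C) _
  have := hfr
  omega

theorem stmt9 (Fq E₁ E₂ : Type*) [Field Fq] [Fintype Fq]
    [AddCommGroup E₁] [Module Fq E₁] [FiniteDimensional Fq E₁]
    [AddCommGroup E₂] [Module Fq E₂] [FiniteDimensional Fq E₂]
    (ρ₁ : Submodule Fq E₁ → ℕ) (ρ₂ : Submodule Fq E₂ → ℕ)
    (hR1₁ : ∀ V : Submodule Fq E₁, ρ₁ V ≤ finrank Fq V)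
    (hR2₁ : ∀ V W : Submodule Fq E₁, V ≤ W → ρ₁ V ≤ ρ₁ W)
    (hR3₁ : ∀ V W : Submodule Fq E₁, ρ₁ (V ⊔ W) + ρ₁ (V ⊓ W) ≤ ρ₁ V + ρ₁ W)
    (hR1₂ : ∀ V : Submodule Fq E₂, ρ₂ V ≤ finrank Fq V)
    (hR2₂ : ∀ V W : Submodule Fq E₂, V ≤ W → ρ₂ V ≤ ρ₂ W)
    (hR3₂ : ∀ V W : Submodule Fq E₂, ρ₂ (V ⊔ W) + ρ₂ (V ⊓ W) ≤ ρ₂ V + ρ₂ W) :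
    (∀ (V₁ : Submodule Fq E₁) (V₂ : Submodule Fq E₂),
        dsRank ρ₁ ρ₂ (V₁.prod V₂) = (ρ₁ V₁ : ℤ) + (ρ₂ V₂ : ℤ)) ∧
    dsRank ρ₁ ρ₂ ⊤ = (ρ₁ ⊤ : ℤ) + (ρ₂ ⊤ : ℤ) := by
  have main : ∀ (V₁ : Submodule Fq E₁) (V₂ : Submodule Fq E₂),
      dsRank ρ₁ ρ₂ (V₁.prod V₂) = (ρ₁ V₁ : ℤ) + (ρ₂ V₂ : ℤ) := by
    intro V₁ V₂
    set V := V₁.prod V₂ with hV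
    set S := {z : ℤ | ∃ X : Submodule Fq (E₁ × E₂), X ≤ V ∧
      z = (ρ₁ (X.map (LinearMap.fst Fq E₁ E₂)) : ℤ) + (ρ₂ (X.map (LinearMap.snd Fq E₁ E₂)) : ℤ)
            - (finrank Fq X : ℤ)} with hS
    have hmem : ((ρ₁ V₁ : ℤ) + (ρ₂ V₂ : ℤ) - (finrank Fq V : ℤ)) ∈ S := by
      refine ⟨V, le_refl _, ?_⟩
      rw [hV, Submodule.prod_map_fst, Submodule.prod_map_snd]
    have hlb : ∀ z ∈ S, (ρ₁ V₁ : ℤ) + (ρ₂ V₂ : ℤ) - (finrank Fq V : ℤ) ≤ z := by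
      rintro z ⟨X, hXV, rfl⟩
      set X₁ := X.map (LinearMap.fst Fq E₁ E₂) with hX1
      set X₂ := X.map (LinearMap.snd Fq E₁ E₂) with hX2
      have hX1le : X₁ ≤ V₁ := by
        rw [hX1, hV] at *
        calc X.map (LinearMap.fst Fq E₁ E₂) ≤ (V₁.prod V₂).map (LinearMap.fst Fq E₁ E₂) :=
          Submodule.map_mono hXV
        _ = V₁ := Submodule.prod_map_fst V₁ V₂
      have hX2le : X₂ ≤ V₂ := by
        calc X.map (LinearMap.snd Fq E₁ E₂) ≤ (V₁.prod V₂).map (LinearMap.snd Fq E₁ E₂) :=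
          Submodule.map_mono hXV
        _ = V₂ := Submodule.prod_map_snd V₁ V₂
      have h1 := rank_diff_le ρ₁ hR1₁ hR3₁ hX1le
      have h2 := rank_diff_le ρ₂ hR1₂ hR3₂ hX2le
      have hXle : X ≤ X₁.prod X₂ := by
        rintro ⟨x₁, x₂⟩ hx
        exact ⟨⟨_, hx, rfl⟩, ⟨_, hx, rfl⟩⟩
      have hdX : finrank Fq X ≤ finrank Fq X₁ + finrank Fq X₂ := by
        calc finrank Fq X ≤ finrank Fq (X₁.prod X₂) := Submodule.finrank_mono hXle
        _ = finrank Fq X₁ + finrank Fq X₂ := finrank_prodSub X₁ X₂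
      have hdV : finrank Fq V = finrank Fq V₁ + finrank Fq V₂ := finrank_prodSub V₁ V₂
      push_cast at *
      linarith
    have hinf : sInf S = (ρ₁ V₁ : ℤ) + (ρ₂ V₂ : ℤ) - (finrank Fq V : ℤ) :=
      le_antisymm (csInf_le ⟨_, hlb⟩ hmem) (le_csInf ⟨_, hmem⟩ hlb)
    rw [dsRank, ← hS, hinf]
    ring
  refine ⟨main, ?_⟩
  have htop : (⊤ : Submodule Fq (E₁ × E₂)) = (⊤ : Submodule Fq E₁).prod ⊤ :=
    (Submodule.prod_top).symm
  rw [htop]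
  exact main ⊤ ⊤
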